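/- Let L ≥ 4 be even. Let φ : ZMod L → ZMod 2 be the natural ring homomorphism and let A = {(i,j) ∈ V_L : φ(i) + φ(j) = 0} be one of the two bipartition classes of the toric lattice graph. Let D be any set of vertices with A ⊆ D ⊆ V_L and |D| even. Then there exists J ∈ F₂^{E_L} with ∂₁ J = 𝟙_D whose Hamming weight equals L²/2. -/

import Mathlib

/-- Vertices of the `L × L` toric lattice. -/
abbrev TV (L : ℕ) := ZMod L × ZMod L

/-- Edge indices of the toric lattice: `((i,j), 0)` joins `(i,j)` and `(i+1,j)`;
`((i,j), 1)` joins `(i,j)` and `(i,j+1)`. -/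
abbrev TE (L : ℕ) := (ZMod L × ZMod L) × Fin 2

/-- Plaquette indices of the toric lattice. -/
abbrev TP (L : ℕ) := ZMod L × ZMod L

/-- First endpoint of an edge. -/
def tEp1 {L : ℕ} (e : TE L) : TV L := e.1

/-- Second endpoint of an edge. -/
def tEp2 {L : ℕ} (e : TE L) : TV L :=
  if e.2 = 0 then (e.1.1 + 1, e.1.2) else (e.1.1, e.1.2 + 1)

/-- Vertex–edge incidence matrix over `F₂`. -/
def tM1 (L : ℕ) : Matrix (TV L) (TE L) (ZMod 2) := fun v e =>
  if v = tEp1 e ∨ v = tEp2 e then 1 else 0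

/-- Edge–plaquette incidence matrix over `F₂`: the plaquette `(i,j)` has the four
boundary edges `((i,j),0)`, `((i,j),1)`, `((i,j+1),0)`, `((i+1,j),1)`. -/
def tM2 (L : ℕ) : Matrix (TE L) (TP L) (ZMod 2) := fun e q =>
  if e = ((q.1, q.2), (0 : Fin 2)) ∨ e = ((q.1, q.2), (1 : Fin 2)) ∨
      e = ((q.1, q.2 + 1), (0 : Fin 2)) ∨ e = ((q.1 + 1, q.2), (1 : Fin 2))
  then 1 else 0

/-- The boundary map `∂₁ : F₂^{E_L} → F₂^{V_L}`, sending the indicator of an edge to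
the sum of the indicators of its two endpoints. -/
def tD1 (L : ℕ) [NeZero L] : (TE L → ZMod 2) →ₗ[ZMod 2] (TV L → ZMod 2) :=
  (tM1 L).mulVecLin

/-- The boundary map `∂₂ : F₂^{P_L} → F₂^{E_L}`, sending the indicator of a plaquette to
the sum of the indicators of its four boundary edges. -/
def tD2 (L : ℕ) [NeZero L] : (TP L → ZMod 2) →ₗ[ZMod 2] (TE L → ZMod 2) :=
  (tM2 L).mulVecLin

/-- The transpose `∂₁^* : F₂^{E_L} → F₂^{P_L}` of `∂₂`. -/
def tD1s (L : ℕ) [NeZero L] : (TE L → ZMod 2) →ₗ[ZMod 2] (TP L → ZMod 2) :=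
  (Matrix.transpose (tM2 L)).mulVecLin

/-- The transpose `∂₂^* : F₂^{V_L} → F₂^{E_L}` of `∂₁`. -/
def tD2s (L : ℕ) [NeZero L] : (TV L → ZMod 2) →ₗ[ZMod 2] (TE L → ZMod 2) :=
  (Matrix.transpose (tM1 L)).mulVecLin

/-- Hamming weight of an `F₂`-vector. -/
def wt {α : Type*} [Fintype α] (x : α → ZMod 2) : ℕ :=
  (Finset.univ.filter fun a => x a ≠ 0).card

/-- Indicator vector of a finite set of coordinates. -/
def ind {α : Type*} [Fintype α] [DecidableEq α] (D : Finset α) : α → ZMod 2 :=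
  fun a => if a ∈ D then 1 else 0

section ToricAux
variable (L : ℕ) [NeZero L] (hdvd : 2 ∣ L) (D : Finset (TV L))

def tPar (v : TV L) : ZMod 2 :=
  ZMod.castHom hdvd (ZMod 2) v.1 + ZMod.castHom hdvd (ZMod 2) v.2

def tDD (c : ZMod L) : ZMod 2 := ∑ s : ZMod L, ind D (s, c - s)

def tKK (e : ZMod L) : ZMod 2 :=
  ∑ c ∈ Finset.range e.val, if c % 2 = 1 then tDD L D (c : ZMod L) else 0

def tYY (a : TV L) : ZMod 2 :=
  (∑ s ∈ Finset.range a.1.val,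
      ind D (((s + 1 : ℕ) : ZMod L), a.1 + a.2 + 1 - ((s + 1 : ℕ) : ZMod L)))
    + ((a.1.val + 1 : ℕ) : ZMod 2)

def tJJ : TE L → ZMod 2 := fun e =>
  if e.2 = (0 : Fin 2) then
    if tPar L hdvd e.1 = 0 ∧ e.1.1 ≠ 0 ∧ tYY L D e.1 = 0 then 1 else 0
  else
    if tPar L hdvd e.1 = 0 then
      if (e.1.1 = 0 ∧ tKK L D (e.1.1 + e.1.2) = 0) ∨ (e.1.1 ≠ 0 ∧ tYY L D e.1 = 1)
      then 1 else 0
    else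
      if e.1.1 = 0 ∧ tKK L D (e.1.1 + e.1.2 + 1) = 1 then 1 else 0

lemma zmod2_cases : ∀ x : ZMod 2, x = 0 ∨ x = 1 := by decide

omit [NeZero L] in
lemma tPar_shift1 (v : TV L) : tPar L hdvd (v.1 + 1, v.2) = tPar L hdvd v + 1 := by
  simp [tPar, map_add, map_one]; ring

omit [NeZero L] in
lemma tPar_shift2 (v : TV L) : tPar L hdvd (v.1, v.2 + 1) = tPar L hdvd v + 1 := by
  simp [tPar, map_add, map_one]; ring

lemma castHom_eq_nat (x : ZMod L) :
    ZMod.castHom hdvd (ZMod 2) x = ((x.val : ℕ) : ZMod 2) := by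
  rw [ZMod.castHom_apply, ← ZMod.natCast_val]

lemma cast2_eq_one_iff (c : ℕ) : (c : ZMod 2) = 1 ↔ c % 2 = 1 := by
  constructor
  · intro h
    rcases Nat.mod_two_eq_zero_or_one c with h0 | h1
    · exfalso
      have h2 : ((c % 2 : ℕ) : ZMod 2) = (c : ZMod 2) := ZMod.natCast_mod c 2
      rw [h0] at h2; simp at h2; rw [← h2] at h; exact absurd h (by decide)
    · exact h1
  · intro h
    have h2 : ((c % 2 : ℕ) : ZMod 2) = (c : ZMod 2) := ZMod.natCast_mod c 2
    rw [h] at h2; simpa using h2.symm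

omit [NeZero L] in
lemma tPar_diag (c : ℕ) (s : ZMod L) : tPar L hdvd (s, (c : ZMod L) - s) = (c : ZMod 2) := by
  have h : ZMod.castHom hdvd (ZMod 2) ((c : ZMod L) - s)
      = (c : ZMod 2) - ZMod.castHom hdvd (ZMod 2) s := by
    rw [map_sub, map_natCast]
  rw [tPar, h]; ring

lemma zsum' {M : Type*} [AddCommMonoid M] (f : ZMod L → M) :
    ∑ x : ZMod L, f x = ∑ s ∈ Finset.range L, f (s : ZMod L) := by
  refine Finset.sum_nbij' (fun x => x.val) (fun s => (s : ZMod L)) ?_ ?_ ?_ ?_ ?_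
  · intro a _; exact Finset.mem_range.mpr (ZMod.val_lt a)
  · intro a _; exact Finset.mem_univ _
  · intro a _; exact ZMod.natCast_rightInverse a
  · intro s hs; exact ZMod.val_cast_of_lt (Finset.mem_range.mp hs)
  · intro a _; rw [ZMod.natCast_rightInverse a]

lemma card_A : 2 * (Finset.univ.filter (fun v : TV L => tPar L hdvd v = 0)).card = L * L := by
  classical
  set A := Finset.univ.filter (fun v : TV L => tPar L hdvd v = 0) with hA
  set B := Finset.univ.filter (fun v : TV L => ¬ tPar L hdvd v = 0) with hB
  have hcard : A.card + B.card = L * L := by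
    rw [hA, hB, Finset.card_filter_add_card_filter_not]
    simp [Finset.card_univ, ZMod.card]
  have hAB : A.card = B.card := by
    refine Finset.card_nbij' (fun v => (v.1 + 1, v.2)) (fun v => (v.1 - 1, v.2)) ?_ ?_ ?_ ?_
    · intro v hv
      rw [hA, Finset.mem_coe, Finset.mem_filter] at hv
      rw [hB, Finset.mem_coe, Finset.mem_filter]
      refine ⟨Finset.mem_univ _, ?_⟩
      rw [tPar_shift1, hv.2]
      decide
    · intro v hv
      rw [hB, Finset.mem_coe, Finset.mem_filter] at hv
      rw [hA, Finset.mem_coe, Finset.mem_filter]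
      refine ⟨Finset.mem_univ _, ?_⟩
      have h := tPar_shift1 L hdvd (v.1 - 1, v.2)
      simp only [sub_add_cancel] at h
      rcases zmod2_cases (tPar L hdvd (v.1 - 1, v.2)) with h1 | h1
      · exact h1
      · exfalso; apply hv.2; rw [h, h1]; decide
    · intro v _; simp
    · intro v _; simp
  omega

lemma sum_dd_eq (hA : Finset.univ.filter (fun v : TV L => tPar L hdvd v = 0) ⊆ D)
    (hD : Even D.card) :
    ∑ c ∈ Finset.range L, (if c % 2 = 1 then tDD L D (c : ZMod L) else 0) = 0 := by
  classical
  set A := Finset.univ.filter (fun v : TV L => tPar L hdvd v = 0) with hAdef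
  have step1 : ∑ c ∈ Finset.range L, (if c % 2 = 1 then tDD L D (c : ZMod L) else 0)
      = ∑ p ∈ (Finset.range L) ×ˢ (Finset.univ : Finset (ZMod L)),
          (if p.1 % 2 = 1 then ind D (p.2, (p.1 : ZMod L) - p.2) else 0) := by
    rw [Finset.sum_product]
    refine Finset.sum_congr rfl fun c _ => ?_
    by_cases h : c % 2 = 1 <;> simp [h, tDD]
  have step2 : ∑ p ∈ (Finset.range L) ×ˢ (Finset.univ : Finset (ZMod L)),
          (if p.1 % 2 = 1 then ind D (p.2, (p.1 : ZMod L) - p.2) else 0)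
      = ∑ v : TV L, (if tPar L hdvd v = 1 then ind D v else 0) := by
    refine Finset.sum_nbij' (fun p => ((p.2 : ZMod L), (p.1 : ZMod L) - p.2))
      (fun v => ((v.1 + v.2).val, v.1)) ?_ ?_ ?_ ?_ ?_
    · intro p _; exact Finset.mem_univ _
    · intro v _
      refine Finset.mem_product.mpr ⟨Finset.mem_range.mpr (ZMod.val_lt _), Finset.mem_univ _⟩
    · rintro ⟨c, s⟩ hp
      have hc : c < L := (Finset.mem_range.mp (Finset.mem_product.mp hp).1)
      simp only [add_sub_cancel]
      rw [ZMod.val_cast_of_lt hc]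
    · rintro ⟨i, j⟩ _
      refine Prod.ext_iff.mpr ⟨rfl, ?_⟩
      show ((((i,j).1 + (i,j).2).val : ZMod L)) - (i,j).1 = (i,j).2
      rw [ZMod.natCast_rightInverse (i + j)]; ring
    · rintro ⟨c, s⟩ _
      have hpar := tPar_diag L hdvd c s
      by_cases h : c % 2 = 1
      · rw [if_pos h, if_pos (by rw [hpar]; exact (cast2_eq_one_iff c).mpr h)]
      · rw [if_neg h, if_neg (by rw [hpar]; intro hq; exact h ((cast2_eq_one_iff c).mp hq))]
  have step3 : ∑ v : TV L, (if tPar L hdvd v = 1 then ind D v else 0)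
      = ((Finset.univ.filter (fun v : TV L => tPar L hdvd v = 1)).filter (· ∈ D)).card := by
    rw [← Finset.sum_filter]
    unfold ind
    rw [Finset.sum_boole]
  rw [step1, step2, step3]
  have hfe : (Finset.univ.filter (fun v : TV L => tPar L hdvd v = 1)).filter (· ∈ D)
      = D.filter (fun v => ¬ tPar L hdvd v = 0) := by
    ext v
    simp only [Finset.mem_filter, Finset.mem_univ, true_and]
    constructor
    · rintro ⟨h1, h2⟩; exact ⟨h2, by rw [h1]; decide⟩
    · rintro ⟨h1, h2⟩
      rcases zmod2_cases (tPar L hdvd v) with h | h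
      · exact absurd h h2
      · exact ⟨h, h1⟩
  rw [hfe]
  have hsplit := Finset.card_filter_add_card_filter_not
    (s := D) (p := fun v => tPar L hdvd v = 0)
  have hDA : D.filter (fun v => tPar L hdvd v = 0) = A := by
    ext v
    simp only [hAdef, Finset.mem_filter, Finset.mem_univ, true_and]
    constructor
    · rintro ⟨-, h⟩; exact h
    · intro h; exact ⟨hA (by simp [hAdef, h]), h⟩
  rw [hDA] at hsplit
  have hcardA : 2 * A.card = L * L := card_A L hdvd
  obtain ⟨m, hm⟩ := id hdvd
  have hdd : 2 ∣ (D.filter (fun v => ¬ tPar L hdvd v = 0)).card := by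
    have h2 : 2 ∣ D.card := hD.two_dvd
    have h4 : A.card = 2 * (m * m) :=
      Nat.eq_of_mul_eq_mul_left two_pos (by rw [hcardA, hm]; ring)
    omega
  rw [ZMod.natCast_eq_zero_iff]
  exact hdd

include hdvd in
lemma tKK_rec (hL : 4 ≤ L)
    (hsum : ∑ c ∈ Finset.range L, (if c % 2 = 1 then tDD L D (c : ZMod L) else 0) = 0)
    (c : ZMod L) (hc : c.val % 2 = 1) :
    tKK L D (c - 1) + tKK L D (c + 1) = tDD L D c := by
  set n := c.val with hn
  have hcn : ((n : ℕ) : ZMod L) = c := ZMod.natCast_rightInverse c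
  have hnL : n < L := ZMod.val_lt c
  have hn1 : 1 ≤ n := by omega
  have hcm1 : ((n - 1 : ℕ) : ZMod L) = c - 1 := by
    push_cast [Nat.cast_sub hn1]; rw [hcn]
  have hvalm1 : (c - 1).val = n - 1 := by
    rw [← hcm1]; exact ZMod.val_cast_of_lt (by omega)
  have helper : ∀ a b : ZMod 2, a + (a + b) = b := by decide
  have helper2 : ∀ a b : ZMod 2, a + b = 0 → a + 0 = b := by decide
  by_cases h2 : n + 1 < L
  · have hcp1 : ((n + 1 : ℕ) : ZMod L) = c + 1 := by push_cast; rw [hcn]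
    have hvalp1 : (c + 1).val = n + 1 := by
      rw [← hcp1]; exact ZMod.val_cast_of_lt h2
    have hexp : tKK L D (c + 1) = tKK L D (c - 1) + tDD L D c := by
      rw [tKK, tKK, hvalp1, hvalm1]
      have h3 : n + 1 = (n - 1) + 1 + 1 := by omega
      rw [h3, Finset.sum_range_succ, Finset.sum_range_succ]
      have he : ¬ ((n - 1) % 2 = 1) := by omega
      have ho : (n - 1 + 1) % 2 = 1 := by omega
      rw [if_neg he, if_pos ho, add_zero]
      rw [show n - 1 + 1 = n from by omega, hcn]
    rw [hexp]
    exact helper _ _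
  · have hnl : n = L - 1 := by omega
    have hcp0 : c + 1 = 0 := by
      rw [← hcn]
      have h3 : ((n : ℕ) : ZMod L) + 1 = ((n + 1 : ℕ) : ZMod L) := by push_cast; ring
      rw [h3, show n + 1 = L from by omega, ZMod.natCast_self]
    have hK0 : tKK L D (c + 1) = 0 := by
      rw [tKK, hcp0, ZMod.val_zero]
      simp
    rw [hcp0] at hK0 ⊢
    rw [hK0]
    apply helper2
    have hdecomp : (∑ cc ∈ Finset.range L, (if cc % 2 = 1 then tDD L D (cc : ZMod L) else 0))
        = tKK L D (c - 1) + (if (L-2) % 2 = 1 then tDD L D ((L-2 : ℕ) : ZMod L) else 0)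
          + (if (L-1) % 2 = 1 then tDD L D ((L-1 : ℕ) : ZMod L) else 0) := by
      have hrange : Finset.range L = Finset.range (L - 2 + 1 + 1) := by
        rw [show L - 2 + 1 + 1 = L from by omega]
      rw [hrange, Finset.sum_range_succ, Finset.sum_range_succ]
      rw [show L - 2 + 1 = L - 1 from by omega]
      rw [tKK, hvalm1, show n - 1 = L - 2 from by omega]
    obtain ⟨m, hm⟩ := id hdvd
    have he2 : ¬ ((L - 2) % 2 = 1) := by omega
    have ho1 : (L - 1) % 2 = 1 := by omega
    rw [if_neg he2, if_pos ho1, add_zero] at hdecomp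
    rw [hsum] at hdecomp
    rw [show L - 1 = n from by omega, hcn] at hdecomp
    exact hdecomp.symm

lemma tYY_pair (i j : ZMod L) (h2 : 2 ≤ i.val) :
    tYY L D (i, j - 1) + tYY L D (i - 1, j) = ind D (i, j) + 1 := by
  have hcn : ((i.val : ℕ) : ZMod L) = i := ZMod.natCast_rightInverse i
  have hnL : i.val < L := ZMod.val_lt i
  obtain ⟨n, hn⟩ : ∃ n, i.val = n := ⟨_, rfl⟩
  rw [hn] at hcn hnL h2
  have hvalm1 : (i - 1).val = n - 1 := by
    have h1 : ((n - 1 : ℕ) : ZMod L) = i - 1 := by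
      push_cast [Nat.cast_sub (by omega : 1 ≤ n)]; rw [hcn]
    rw [← h1]; exact ZMod.val_cast_of_lt (by omega : n - 1 < L)
  have e1 : (i, j - 1).1 + (i, j - 1).2 + 1 = i + j := by simp; ring
  have e2 : (i - 1, j).1 + (i - 1, j).2 + 1 = i + j := by simp; ring
  rw [tYY, tYY, e1, e2, hvalm1, hn]
  have hsplit : ∑ s ∈ Finset.range n,
        ind D (((s + 1 : ℕ) : ZMod L), i + j - ((s + 1 : ℕ) : ZMod L))
      = (∑ s ∈ Finset.range (n - 1),
          ind D (((s + 1 : ℕ) : ZMod L), i + j - ((s + 1 : ℕ) : ZMod L)))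
        + ind D (i, j) := by
    rw [show n = (n - 1) + 1 from by omega, Finset.sum_range_succ]
    have hlast : ind D (((n - 1 + 1 : ℕ) : ZMod L), i + j - ((n - 1 + 1 : ℕ) : ZMod L))
        = ind D (i, j) := by
      rw [show n - 1 + 1 = n from by omega, hcn, show i + j - i = j from by ring]
    rw [hlast, show n - 1 + 1 = n from by omega]
  rw [hsplit]
  have hpar : ((n + 1 : ℕ) : ZMod 2) = ((n - 1 + 1 : ℕ) : ZMod 2) + 1 := by
    rw [show n - 1 + 1 = n from by omega]; push_cast; ring
  rw [hpar]
  generalize (∑ s ∈ Finset.range (n - 1),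
      ind D (((s + 1 : ℕ) : ZMod L), i + j - ((s + 1 : ℕ) : ZMod L))) = S
  generalize ind D (i, j) = T
  generalize ((n - 1 + 1 : ℕ) : ZMod 2) = N
  revert S T N
  decide

lemma tYY_one (i j : ZMod L) (h1 : i.val = 1) :
    tYY L D (i, j - 1) = ind D (i, j) := by
  have hcn : ((i.val : ℕ) : ZMod L) = i := ZMod.natCast_rightInverse i
  rw [h1] at hcn
  have e1 : (i, j - 1).1 + (i, j - 1).2 + 1 = i + j := by simp; ring
  rw [tYY, e1]
  simp only [h1]
  rw [Finset.sum_range_one]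
  have harg : ((0 + 1 : ℕ) : ZMod L) = i := by rw [← hcn]
  rw [harg]
  have hij : i + j - i = j := by ring
  rw [hij]
  have h2 : ((1 + 1 : ℕ) : ZMod 2) = 0 := by decide
  rw [h2, add_zero]

include hdvd in
lemma tYY_last (hL : 4 ≤ L) (j : ZMod L) :
    tYY L D (-1, j) = tDD L D j + ind D (0, j) := by
  have hm1 : ((L - 1 : ℕ) : ZMod L) = -1 := by
    push_cast [Nat.cast_sub (by omega : 1 ≤ L)]
    rw [ZMod.natCast_self]; ring
  have hval : (-1 : ZMod L).val = L - 1 := by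
    rw [← hm1]; exact ZMod.val_cast_of_lt (by omega)
  have e1 : ((-1 : ZMod L), j).1 + ((-1 : ZMod L), j).2 + 1 = j := by simp
  rw [tYY, e1, hval]
  have hpar : ((L - 1 + 1 : ℕ) : ZMod 2) = 0 := by
    rw [show L - 1 + 1 = L from by omega]
    exact (ZMod.natCast_eq_zero_iff L 2).mpr hdvd
  rw [hpar, add_zero]
  have hdd : tDD L D j = (∑ s ∈ Finset.range (L - 1),
      ind D (((s + 1 : ℕ) : ZMod L), j - ((s + 1 : ℕ) : ZMod L))) + ind D (0, j) := by
    rw [tDD, zsum']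
    have hrange : Finset.range L = Finset.range ((L - 1) + 1) := by
      rw [show L - 1 + 1 = L from by omega]
    rw [hrange, Finset.sum_range_succ']
    norm_num
  rw [hdd]
  have hfin : ∀ S T : ZMod 2, S = S + T + T := by decide
  exact hfin _ _

end ToricAux

section Main
variable (L : ℕ) [NeZero L] (hdvd : 2 ∣ L) (D : Finset (TV L))

lemma tD1_apply (hL : 1 < L) (J : TE L → ZMod 2) (v : TV L) :
    tD1 L J v = J (v, 0) + J (v, 1) + J ((v.1 - 1, v.2), 0) + J ((v.1, v.2 - 1), 1) := by
  haveI : Fact (1 < L) := ⟨hL⟩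
  have key : ∀ e : TE L, tM1 L v e * J e =
      if e = (v, 0) ∨ e = (v, 1) ∨ e = ((v.1 - 1, v.2), 0) ∨ e = ((v.1, v.2 - 1), 1)
      then J e else 0 := by
    rintro ⟨⟨i, j⟩, d⟩
    have hiff : (v = tEp1 ((⟨i,j⟩,d) : TE L) ∨ v = tEp2 ((⟨i,j⟩,d) : TE L)) ↔
        ((((i,j),d) : TE L) = (v, 0) ∨ (((i,j),d) : TE L) = (v, 1) ∨
         (((i,j),d) : TE L) = ((v.1 - 1, v.2), 0) ∨
         (((i,j),d) : TE L) = ((v.1, v.2 - 1), 1)) := by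
      fin_cases d <;> simp [tEp1, tEp2, Prod.ext_iff, eq_sub_iff_add_eq, eq_comm]
    rw [tM1]
    by_cases h : v = tEp1 ((⟨i,j⟩,d) : TE L) ∨ v = tEp2 ((⟨i,j⟩,d) : TE L)
    · rw [if_pos h, if_pos (hiff.mp h), one_mul]
    · rw [if_neg h, if_neg (fun hq => h (hiff.mpr hq)), zero_mul]
  have hv : tD1 L J v = ∑ e : TE L, tM1 L v e * J e := by
    simp [tD1, Matrix.mulVecLin_apply, Matrix.mulVec, dotProduct]
  rw [hv]
  simp only [key]
  rw [Finset.sum_ite, Finset.sum_const_zero, add_zero]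
  have hne10 : (1 : ZMod L) ≠ 0 := one_ne_zero
  have hs : Finset.univ.filter (fun e : TE L =>
      e = (v, 0) ∨ e = (v, 1) ∨ e = ((v.1 - 1, v.2), 0) ∨ e = ((v.1, v.2 - 1), 1)) =
      {(v, 0), (v, 1), ((v.1 - 1, v.2), 0), ((v.1, v.2 - 1), 1)} := by
    ext e
    simp [Finset.mem_insert, Finset.mem_filter]
  rw [hs]
  have h12 : ((v, 0) : TE L) ≠ (v, 1) := by simp
  have h13 : ((v, 0) : TE L) ≠ ((v.1 - 1, v.2), 0) := by
    simp only [ne_eq, Prod.mk.injEq, Prod.ext_iff, not_and]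
    rintro ⟨h, -⟩
    exact (hne10 (sub_eq_self.mp h.symm)).elim
  have h14 : ((v, 0) : TE L) ≠ ((v.1, v.2 - 1), 1) := by simp
  have h23 : ((v, 1) : TE L) ≠ ((v.1 - 1, v.2), 0) := by simp
  have h24 : ((v, 1) : TE L) ≠ ((v.1, v.2 - 1), 1) := by
    simp only [ne_eq, Prod.mk.injEq, Prod.ext_iff, not_and]
    rintro ⟨-, h⟩
    exact (hne10 (sub_eq_self.mp h.symm)).elim
  have h34 : (((v.1 - 1, v.2), 0) : TE L) ≠ ((v.1, v.2 - 1), 1) := by simp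
  rw [Finset.sum_insert (by simp [h12, h13, h14]),
      Finset.sum_insert (by simp [h23, h24]),
      Finset.sum_insert (by simp [h34]), Finset.sum_singleton]
  ring

lemma tD1_tJJ (hL : 4 ≤ L)
    (hA : Finset.univ.filter (fun v : TV L => tPar L hdvd v = 0) ⊆ D)
    (hD : Even D.card) :
    tD1 L (tJJ L hdvd D) = ind D := by
  haveI : Fact (1 < L) := ⟨by omega⟩
  have hsum := sum_dd_eq L hdvd D hA hD
  funext v
  obtain ⟨i, j⟩ := v
  rw [tD1_apply L (by omega)]
  simp only
  have hT1 : tJJ L hdvd D ((i, j), 0)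
      = if tPar L hdvd (i, j) = 0 ∧ i ≠ 0 ∧ tYY L D (i, j) = 0 then 1 else 0 := rfl
  have hT2 : tJJ L hdvd D ((i, j), 1)
      = if tPar L hdvd (i, j) = 0 then
          if (i = 0 ∧ tKK L D (i + j) = 0) ∨ (i ≠ 0 ∧ tYY L D (i, j) = 1) then 1 else 0
        else if i = 0 ∧ tKK L D (i + j + 1) = 1 then 1 else 0 := by
    rw [tJJ]; norm_num
  have hT3 : tJJ L hdvd D ((i - 1, j), 0)
      = if tPar L hdvd (i - 1, j) = 0 ∧ i - 1 ≠ 0 ∧ tYY L D (i - 1, j) = 0 then 1 else 0 := rfl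
  have hT4 : tJJ L hdvd D ((i, j - 1), 1)
      = if tPar L hdvd (i, j - 1) = 0 then
          if (i = 0 ∧ tKK L D (i + (j - 1)) = 0) ∨ (i ≠ 0 ∧ tYY L D (i, j - 1) = 1)
          then 1 else 0
        else if i = 0 ∧ tKK L D (i + (j - 1) + 1) = 1 then 1 else 0 := by
    rw [tJJ]; norm_num
  rw [hT1, hT2, hT3, hT4]
  have hsh1 : tPar L hdvd (i - 1, j) = tPar L hdvd (i, j) + 1 := by
    have h := tPar_shift1 L hdvd (i - 1, j)
    simp only [sub_add_cancel] at h
    rcases zmod2_cases (tPar L hdvd (i - 1, j)) with h1 | h1 <;>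
      rcases zmod2_cases (tPar L hdvd (i, j)) with h2 | h2 <;>
      rw [h1, h2] at h ⊢ <;> first | rfl | (exfalso; revert h; decide)
  have hsh2 : tPar L hdvd (i, j - 1) = tPar L hdvd (i, j) + 1 := by
    have h := tPar_shift2 L hdvd (i, j - 1)
    simp only [sub_add_cancel] at h
    rcases zmod2_cases (tPar L hdvd (i, j - 1)) with h1 | h1 <;>
      rcases zmod2_cases (tPar L hdvd (i, j)) with h2 | h2 <;>
      rw [h1, h2] at h ⊢ <;> first | rfl | (exfalso; revert h; decide)
  rw [show i + (j - 1) + 1 = i + j from by ring]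
  by_cases hv : tPar L hdvd (i, j) = 0
  · -- v ∈ A
    have hvD : ind D (i, j) = 1 := by
      rw [ind, if_pos (hA (Finset.mem_filter.mpr ⟨Finset.mem_univ _, hv⟩))]
    have h3 : ¬ (tPar L hdvd (i - 1, j) = 0) := by rw [hsh1, hv]; decide
    have h4 : ¬ (tPar L hdvd (i, j - 1) = 0) := by rw [hsh2, hv]; decide
    rw [if_pos hv, if_neg h4, hvD,
        if_neg (show ¬ (tPar L hdvd (i - 1, j) = 0 ∧ i - 1 ≠ 0 ∧ tYY L D (i - 1, j) = 0)
          from fun hc => h3 hc.1)]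
    by_cases hi : i = 0
    · subst hi
      rw [if_neg (show ¬ (tPar L hdvd ((0 : ZMod L), j) = 0 ∧ (0 : ZMod L) ≠ 0 ∧
          tYY L D (0, j) = 0) from fun hc => hc.2.1 rfl)]
      rcases zmod2_cases (tKK L D ((0 : ZMod L) + j)) with hk | hk
      · rw [if_pos (show ((0 : ZMod L) = 0 ∧ tKK L D (0 + j) = 0) ∨
              ((0 : ZMod L) ≠ 0 ∧ tYY L D (0, j) = 1) from Or.inl ⟨rfl, hk⟩),
            if_neg (show ¬ ((0 : ZMod L) = 0 ∧ tKK L D (0 + j) = 1)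
              from fun hc => absurd hc.2 (by rw [hk]; decide))]
        decide
      · rw [if_pos (show (0 : ZMod L) = 0 ∧ tKK L D (0 + j) = 1 from ⟨rfl, hk⟩),
            if_neg (show ¬ (((0 : ZMod L) = 0 ∧ tKK L D (0 + j) = 0) ∨
              ((0 : ZMod L) ≠ 0 ∧ tYY L D (0, j) = 1)) by
                rintro (⟨-, h0⟩ | ⟨h0, -⟩)
                · rw [hk] at h0; exact absurd h0 (by decide)
                · exact h0 rfl)]
        decide
    · rw [if_neg (show ¬ (i = 0 ∧ tKK L D (i + j) = 1) from fun hc => hi hc.1)]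
      rcases zmod2_cases (tYY L D (i, j)) with hy | hy
      · rw [if_pos (show tPar L hdvd (i, j) = 0 ∧ i ≠ 0 ∧ tYY L D (i, j) = 0
              from ⟨hv, hi, hy⟩),
            if_neg (show ¬ ((i = 0 ∧ tKK L D (i + j) = 0) ∨ (i ≠ 0 ∧ tYY L D (i, j) = 1)) by
              rintro (⟨h0, -⟩ | ⟨-, h1⟩)
              · exact hi h0
              · rw [hy] at h1; exact absurd h1 (by decide))]
        decide
      · rw [if_neg (show ¬ (tPar L hdvd (i, j) = 0 ∧ i ≠ 0 ∧ tYY L D (i, j) = 0)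
              from fun hc => by rw [hy] at hc; exact absurd hc.2.2 (by decide)),
            if_pos (show (i = 0 ∧ tKK L D (i + j) = 0) ∨ (i ≠ 0 ∧ tYY L D (i, j) = 1)
              from Or.inr ⟨hi, hy⟩)]
        decide
  · -- v ∈ B
    have hv1 : tPar L hdvd (i, j) = 1 := by
      rcases zmod2_cases (tPar L hdvd (i, j)) with h | h
      · exact absurd h hv
      · exact h
    have h3 : tPar L hdvd (i - 1, j) = 0 := by rw [hsh1, hv1]; decide
    have h4 : tPar L hdvd (i, j - 1) = 0 := by rw [hsh2, hv1]; decide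
    rw [if_neg (show ¬ (tPar L hdvd (i, j) = 0 ∧ i ≠ 0 ∧ tYY L D (i, j) = 0)
          from fun hc => hv hc.1),
        if_neg hv, if_pos h4]
    by_cases hi : i = 0
    · subst hi
      have hjodd : j.val % 2 = 1 := by
        have hcast : ZMod.castHom hdvd (ZMod 2) j = 1 := by
          have h0 : ZMod.castHom hdvd (ZMod 2) (((0 : ZMod L), j) : TV L).1 = 0 := map_zero _
          rw [tPar] at hv1
          rw [h0, zero_add] at hv1
          exact hv1
        rw [castHom_eq_nat] at hcast
        exact (cast2_eq_one_iff _).mp hcast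
      have hrec := tKK_rec L hdvd D hL hsum j hjodd
      have hYlast := tYY_last L hdvd D hL j
      rw [show (0 : ZMod L) - 1 = -1 from by ring, show (0 : ZMod L) + j = j from by ring,
          show (0 : ZMod L) + (j - 1) = j - 1 from by ring]
      have hE2 : (if (0 : ZMod L) = 0 ∧ tKK L D (j + 1) = 1 then (1 : ZMod 2) else 0)
          = tKK L D (j + 1) := by
        rcases zmod2_cases (tKK L D (j + 1)) with h | h <;> rw [h]
        · rw [if_neg (fun hc => absurd hc.2 (by decide))]
        · rw [if_pos ⟨rfl, rfl⟩]
      have hE3 : (if tPar L hdvd (-1, j) = 0 ∧ (-1 : ZMod L) ≠ 0 ∧ tYY L D (-1, j) = 0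
          then (1 : ZMod 2) else 0) = tYY L D (-1, j) + 1 := by
        have hne : (-1 : ZMod L) ≠ 0 := by
          intro hc; rw [neg_eq_zero] at hc; exact one_ne_zero hc
        have h3' : tPar L hdvd (-1, j) = 0 := by
          rw [show ((-1 : ZMod L), j) = ((0 : ZMod L) - 1, j) from by norm_num]
          exact h3
        rcases zmod2_cases (tYY L D (-1, j)) with h | h <;> rw [h]
        · rw [if_pos ⟨h3', hne, rfl⟩]; decide
        · rw [if_neg (fun hc => absurd hc.2.2 (by decide))]; decide
      have hE4 : (if ((0 : ZMod L) = 0 ∧ tKK L D (j - 1) = 0) ∨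
            ((0 : ZMod L) ≠ 0 ∧ tYY L D ((0 : ZMod L), j - 1) = 1)
          then (1 : ZMod 2) else 0) = tKK L D (j - 1) + 1 := by
        rcases zmod2_cases (tKK L D (j - 1)) with h | h <;> rw [h]
        · rw [if_pos (Or.inl ⟨rfl, rfl⟩)]; decide
        · rw [if_neg (show ¬ _ by
              rintro (⟨-, h0⟩ | ⟨h0, -⟩)
              · exact absurd h0 (by decide)
              · exact h0 rfl)]
          decide
      rw [hE2, hE3, hE4, hYlast]
      have hfin : ∀ P Q G I : ZMod 2, P + Q = G →
          0 + Q + (G + I + 1) + (P + 1) = I := by decide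
      exact hfin _ _ _ _ hrec
    · rw [if_neg (show ¬ (i = 0 ∧ tKK L D (i + j + 1) = 1) from fun hc => hi hc.1)]
      have hival : i.val ≠ 0 := fun h => hi ((ZMod.val_eq_zero i).mp h)
      by_cases h1v : i.val = 1
      · have hi1 : i = 1 := by
          have h := ZMod.natCast_rightInverse i
          rw [h1v] at h
          rw [← h, Nat.cast_one]
        have hsub0 : i - 1 = 0 := by rw [hi1]; ring
        rw [if_neg (show ¬ (tPar L hdvd (i - 1, j) = 0 ∧ i - 1 ≠ 0 ∧ tYY L D (i - 1, j) = 0)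
              from fun hc => hc.2.1 hsub0)]
        have hy1 := tYY_one L D i j h1v
        rcases zmod2_cases (ind D (i, j)) with hI | hI <;> rw [hI]
        · rw [if_neg (show ¬ ((i = 0 ∧ tKK L D (i + (j - 1)) = 0) ∨
              (i ≠ 0 ∧ tYY L D (i, j - 1) = 1)) by
                rintro (⟨h0, -⟩ | ⟨-, hY⟩)
                · exact hi h0
                · rw [hy1, hI] at hY; exact absurd hY (by decide))]
          decide
        · rw [if_pos (show (i = 0 ∧ tKK L D (i + (j - 1)) = 0) ∨
              (i ≠ 0 ∧ tYY L D (i, j - 1) = 1) from Or.inr ⟨hi, by rw [hy1, hI]⟩)]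
          decide
      · have h2v : 2 ≤ i.val := by omega
        have hm1ne : i - 1 ≠ 0 := by
          intro hc
          rw [sub_eq_zero] at hc
          rw [hc] at h1v
          exact h1v (ZMod.val_one L)
        have hpair := tYY_pair L D i j h2v
        have hE3 : (if tPar L hdvd (i - 1, j) = 0 ∧ i - 1 ≠ 0 ∧ tYY L D (i - 1, j) = 0
            then (1 : ZMod 2) else 0) = tYY L D (i - 1, j) + 1 := by
          rcases zmod2_cases (tYY L D (i - 1, j)) with h | h <;> rw [h]
          · rw [if_pos ⟨h3, hm1ne, rfl⟩]; decide
          · rw [if_neg (fun hc => absurd hc.2.2 (by decide))]; decide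
        have hE4 : (if (i = 0 ∧ tKK L D (i + (j - 1)) = 0) ∨
              (i ≠ 0 ∧ tYY L D (i, j - 1) = 1)
            then (1 : ZMod 2) else 0) = tYY L D (i, j - 1) := by
          rcases zmod2_cases (tYY L D (i, j - 1)) with h | h <;> rw [h]
          · rw [if_neg (show ¬ _ by
                rintro (⟨h0, -⟩ | ⟨-, h1⟩)
                · exact hi h0
                · exact absurd h1 (by decide))]
          · rw [if_pos (Or.inr ⟨hi, rfl⟩)]
        rw [hE3, hE4]
        have hfin : ∀ Y1 Y2 I : ZMod 2, Y1 + Y2 = I + 1 →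
            0 + 0 + (Y2 + 1) + Y1 = I := by decide
        exact hfin _ _ _ hpair

def tFwd : TE L → TV L := fun e =>
  if tPar L hdvd e.1 = 0 then e.1 else (e.1.1, e.1.2 + 1)

def tBwd : TV L → TE L := fun a =>
  if a.1 = 0 then
    (if tKK L D (a.1 + a.2) = 0 then ((a, 1) : TE L) else ((a.1, a.2 - 1), 1))
  else (if tYY L D a = 0 then (a, 0) else (a, 1))

lemma fin2_cases : ∀ z : Fin 2, z = 0 ∨ z = 1 := by decide

lemma wt_tJJ (hL : 4 ≤ L) : wt (tJJ L hdvd D) = L ^ 2 / 2 := by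
  haveI : Fact (1 < L) := ⟨by omega⟩
  have hone : (1 : ZMod 2) ≠ 0 := by decide
  have hbij : (Finset.univ.filter fun e : TE L => tJJ L hdvd D e ≠ 0).card
      = (Finset.univ.filter (fun v : TV L => tPar L hdvd v = 0)).card := by
    refine Finset.card_nbij' (tFwd L hdvd) (tBwd L D) ?_ ?_ ?_ ?_
    · -- forward maps support into A
      rintro ⟨⟨x, y⟩, d⟩ he
      have hne := (Finset.mem_filter.mp he).2
      refine Finset.mem_filter.mpr ⟨Finset.mem_univ _, ?_⟩
      rcases fin2_cases d with hd | hd <;> subst hd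
      · have hc : tPar L hdvd (x, y) = 0 ∧ x ≠ 0 ∧ tYY L D (x, y) = 0 := by
          by_contra hcon
          exact hne (by rw [show tJJ L hdvd D ((x, y), 0) =
            (if tPar L hdvd (x, y) = 0 ∧ x ≠ 0 ∧ tYY L D (x, y) = 0 then 1 else 0) from rfl,
            if_neg hcon])
        show tPar L hdvd (if tPar L hdvd (x, y) = 0 then ((x, y) : TV L) else (x, y + 1)) = 0
        rw [if_pos hc.1]; exact hc.1
      · show tPar L hdvd (if tPar L hdvd (x, y) = 0 then ((x, y) : TV L) else (x, y + 1)) = 0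
        by_cases hp : tPar L hdvd (x, y) = 0
        · rw [if_pos hp]; exact hp
        · rw [if_neg hp]
          have h : tPar L hdvd (x, y + 1) = tPar L hdvd (x, y) + 1 := tPar_shift2 L hdvd (x, y)
          rcases zmod2_cases (tPar L hdvd (x, y)) with h1 | h1
          · exact absurd h1 hp
          · rw [h1] at h; rw [h]; decide
    · -- backward maps A into support
      rintro ⟨x, y⟩ ha
      have hpa := (Finset.mem_filter.mp ha).2
      refine Finset.mem_filter.mpr ⟨Finset.mem_univ _, ?_⟩
      show tJJ L hdvd D (if x = 0 then
          (if tKK L D (x + y) = 0 then ((((x, y) : TV L), 1) : TE L) else ((x, y - 1), 1))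
        else (if tYY L D (x, y) = 0 then (((x, y) : TV L), 0) else ((x, y), 1))) ≠ 0
      by_cases hx : x = 0
      · by_cases hk : tKK L D (x + y) = 0
        · rw [if_pos hx, if_pos hk]
          show (if tPar L hdvd (x, y) = 0 then
            (if (x = 0 ∧ tKK L D (x + y) = 0) ∨ (x ≠ 0 ∧ tYY L D (x, y) = 1)
              then (1 : ZMod 2) else 0)
            else (if x = 0 ∧ tKK L D (x + y + 1) = 1 then 1 else 0)) ≠ 0
          rw [if_pos hpa, if_pos (Or.inl ⟨hx, hk⟩)]
          exact hone
        · rw [if_pos hx, if_neg hk]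
          have hp1 : ¬ tPar L hdvd (x, y - 1) = 0 := by
            have h : tPar L hdvd (x, y - 1 + 1) = tPar L hdvd (x, y - 1) + 1 :=
              tPar_shift2 L hdvd (x, y - 1)
            rw [sub_add_cancel, hpa] at h
            rcases zmod2_cases (tPar L hdvd (x, y - 1)) with h1 | h1
            · rw [h1] at h; exact absurd h (by decide)
            · rw [h1]; decide
          show (if tPar L hdvd (x, y - 1) = 0 then
            (if (x = 0 ∧ tKK L D (x + (y - 1)) = 0) ∨ (x ≠ 0 ∧ tYY L D (x, y - 1) = 1)
              then (1 : ZMod 2) else 0)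
            else (if x = 0 ∧ tKK L D (x + (y - 1) + 1) = 1 then 1 else 0)) ≠ 0
          rw [if_neg hp1,
            if_pos (show x = 0 ∧ tKK L D (x + (y - 1) + 1) = 1 from ⟨hx, by
              rw [show x + (y - 1) + 1 = x + y from by ring]
              rcases zmod2_cases (tKK L D (x + y)) with h1 | h1
              · exact absurd h1 hk
              · exact h1⟩)]
          exact hone
      · by_cases hy : tYY L D (x, y) = 0
        · rw [if_neg hx, if_pos hy]
          show (if tPar L hdvd (x, y) = 0 ∧ x ≠ 0 ∧ tYY L D (x, y) = 0
            then (1 : ZMod 2) else 0) ≠ 0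
          rw [if_pos ⟨hpa, hx, hy⟩]
          exact hone
        · rw [if_neg hx, if_neg hy]
          have hy1 : tYY L D (x, y) = 1 := by
            rcases zmod2_cases (tYY L D (x, y)) with h1 | h1
            · exact absurd h1 hy
            · exact h1
          show (if tPar L hdvd (x, y) = 0 then
            (if (x = 0 ∧ tKK L D (x + y) = 0) ∨ (x ≠ 0 ∧ tYY L D (x, y) = 1)
              then (1 : ZMod 2) else 0)
            else (if x = 0 ∧ tKK L D (x + y + 1) = 1 then 1 else 0)) ≠ 0
          rw [if_pos hpa, if_pos (Or.inr ⟨hx, hy1⟩)]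
          exact hone
    · -- left inverse on support
      rintro ⟨⟨x, y⟩, d⟩ he
      have hne := (Finset.mem_filter.mp he).2
      rcases fin2_cases d with hd | hd <;> subst hd
      · have hc : tPar L hdvd (x, y) = 0 ∧ x ≠ 0 ∧ tYY L D (x, y) = 0 := by
          by_contra hcon
          exact hne (by rw [show tJJ L hdvd D ((x, y), 0) =
            (if tPar L hdvd (x, y) = 0 ∧ x ≠ 0 ∧ tYY L D (x, y) = 0 then 1 else 0) from rfl,
            if_neg hcon])
        show tBwd L D (if tPar L hdvd (x, y) = 0 then ((x, y) : TV L) else (x, y + 1))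
            = (((x, y), 0) : TE L)
        rw [if_pos hc.1]
        show (if x = 0 then
            (if tKK L D (x + y) = 0 then ((((x, y) : TV L), 1) : TE L) else ((x, y - 1), 1))
          else (if tYY L D (x, y) = 0 then (((x, y) : TV L), 0) else ((x, y), 1)))
            = (((x, y), 0) : TE L)
        rw [if_neg hc.2.1, if_pos hc.2.2]
      · by_cases hp : tPar L hdvd (x, y) = 0
        · have hc : (x = 0 ∧ tKK L D (x + y) = 0) ∨ (x ≠ 0 ∧ tYY L D (x, y) = 1) := by
            by_contra hcon
            apply hne
            show (if tPar L hdvd (x, y) = 0 then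
              (if (x = 0 ∧ tKK L D (x + y) = 0) ∨ (x ≠ 0 ∧ tYY L D (x, y) = 1)
                then (1 : ZMod 2) else 0)
              else (if x = 0 ∧ tKK L D (x + y + 1) = 1 then 1 else 0)) = 0
            rw [if_pos hp, if_neg hcon]
          show tBwd L D (if tPar L hdvd (x, y) = 0 then ((x, y) : TV L) else (x, y + 1))
              = (((x, y), 1) : TE L)
          rw [if_pos hp]
          show (if x = 0 then
              (if tKK L D (x + y) = 0 then ((((x, y) : TV L), 1) : TE L) else ((x, y - 1), 1))
            else (if tYY L D (x, y) = 0 then (((x, y) : TV L), 0) else ((x, y), 1)))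
              = (((x, y), 1) : TE L)
          rcases hc with ⟨hx, hk⟩ | ⟨hx, hy⟩
          · rw [if_pos hx, if_pos hk]
          · rw [if_neg hx, if_neg (show ¬ tYY L D (x, y) = 0 by rw [hy]; decide)]
        · have hc : x = 0 ∧ tKK L D (x + y + 1) = 1 := by
            by_contra hcon
            apply hne
            show (if tPar L hdvd (x, y) = 0 then
              (if (x = 0 ∧ tKK L D (x + y) = 0) ∨ (x ≠ 0 ∧ tYY L D (x, y) = 1)
                then (1 : ZMod 2) else 0)
              else (if x = 0 ∧ tKK L D (x + y + 1) = 1 then 1 else 0)) = 0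
            rw [if_neg hp, if_neg hcon]
          show tBwd L D (if tPar L hdvd (x, y) = 0 then ((x, y) : TV L) else (x, y + 1))
              = (((x, y), 1) : TE L)
          rw [if_neg hp]
          show (if x = 0 then
              (if tKK L D (x + (y + 1)) = 0 then ((((x, y + 1) : TV L), 1) : TE L)
                else ((x, y + 1 - 1), 1))
            else (if tYY L D (x, y + 1) = 0 then (((x, y + 1) : TV L), 0) else ((x, y + 1), 1)))
              = (((x, y), 1) : TE L)
          rw [if_pos hc.1,
            if_neg (show ¬ tKK L D (x + (y + 1)) = 0 by
              rw [show x + (y + 1) = x + y + 1 from by ring, hc.2]; decide),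
            show y + 1 - 1 = y from by ring]
    · -- right inverse on A
      rintro ⟨x, y⟩ ha
      have hpa := (Finset.mem_filter.mp ha).2
      show tFwd L hdvd (if x = 0 then
          (if tKK L D (x + y) = 0 then ((((x, y) : TV L), 1) : TE L) else ((x, y - 1), 1))
        else (if tYY L D (x, y) = 0 then (((x, y) : TV L), 0) else ((x, y), 1)))
          = ((x, y) : TV L)
      by_cases hx : x = 0
      · by_cases hk : tKK L D (x + y) = 0
        · rw [if_pos hx, if_pos hk]
          show (if tPar L hdvd (x, y) = 0 then ((x, y) : TV L) else (x, y + 1)) = ((x, y) : TV L)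
          rw [if_pos hpa]
        · rw [if_pos hx, if_neg hk]
          have hp1 : ¬ tPar L hdvd (x, y - 1) = 0 := by
            have h : tPar L hdvd (x, y - 1 + 1) = tPar L hdvd (x, y - 1) + 1 :=
              tPar_shift2 L hdvd (x, y - 1)
            rw [sub_add_cancel, hpa] at h
            rcases zmod2_cases (tPar L hdvd (x, y - 1)) with h1 | h1
            · rw [h1] at h; exact absurd h (by decide)
            · rw [h1]; decide
          show (if tPar L hdvd (x, y - 1) = 0 then ((x, y - 1) : TV L) else (x, y - 1 + 1))
              = ((x, y) : TV L)
          rw [if_neg hp1, show y - 1 + 1 = y from by ring]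
      · by_cases hy : tYY L D (x, y) = 0
        · rw [if_neg hx, if_pos hy]
          show (if tPar L hdvd (x, y) = 0 then ((x, y) : TV L) else (x, y + 1)) = ((x, y) : TV L)
          rw [if_pos hpa]
        · rw [if_neg hx, if_neg hy]
          show (if tPar L hdvd (x, y) = 0 then ((x, y) : TV L) else (x, y + 1)) = ((x, y) : TV L)
          rw [if_pos hpa]
  rw [wt, hbij]
  have hcard := card_A L hdvd
  have hsq : L ^ 2 = L * L := sq L
  omega

end Main

/-- **Diamond defects admit a small join.**
Let `L ≥ 4` be even, let `A = {(i,j) : φ(i)+φ(j) = 0}` (with `φ : ZMod L → ZMod 2` the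
natural ring homomorphism) be one of the two bipartition classes of the toric lattice
graph, and let `D` be any even-cardinality vertex set containing `A`.  Then there is a
`D`-join of Hamming weight exactly `L²/2`, i.e. some `J` with `∂₁ J = 𝟙_D` and
`wt J = L²/2`. -/
theorem toric_bipartition_class_join
    (L : ℕ) [NeZero L] (hL : 4 ≤ L) (hdvd : 2 ∣ L)
    (D : Finset (TV L))
    (hA : Finset.univ.filter
        (fun v : TV L =>
          ZMod.castHom hdvd (ZMod 2) v.1 + ZMod.castHom hdvd (ZMod 2) v.2 = 0) ⊆ D)
    (hD : Even D.card) :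
    ∃ J : TE L → ZMod 2, tD1 L J = ind D ∧ wt J = L ^ 2 / 2 := by
  exact ⟨tJJ L hdvd D, tD1_tJJ L hdvd D hL hA hD, wt_tJJ L hdvd D hL⟩
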